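/- arXiv:1003.3898 — 3 statements merged into one kernel-verified Lean document; each statement's English description precedes it below -/
import Mathlib

section
/- For fixed r > 0 and fixed u > 0, the angle function ψ_γ(u) = arccos((u² + γ² − r²)/(2uγ)) is antitone (non-increasing) in γ on the set of γ ≥ r with γ − r ≤ u ≤ γ: if r ≤ γ₂ ≤ γ₁ and u is in the common domain, then ψ_{γ₁}(u) ≤ ψ_{γ₂}(u). -/
/-- Sink dependence: for fixed r > 0 and u > 0, the angle function
ψ_γ(u) = arccos((u² + γ² − r²)/(2uγ)) is antitone in γ:
if r ≤ γ₂ ≤ γ₁ and u lies in the common domain (γ₁ − r ≤ u ≤ γ₂),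
then ψ_{γ₁}(u) ≤ ψ_{γ₂}(u). -/
theorem stmt_2 (r u γ₁ γ₂ : ℝ) (hr : 0 < r) (hu : 0 < u)
    (h2 : r ≤ γ₂) (h12 : γ₂ ≤ γ₁) (hl : γ₁ - r ≤ u) (hup : u ≤ γ₂) :
    Real.arccos ((u ^ 2 + γ₁ ^ 2 - r ^ 2) / (2 * u * γ₁)) ≤
      Real.arccos ((u ^ 2 + γ₂ ^ 2 - r ^ 2) / (2 * u * γ₂)) := by
  have hγ2 : 0 < γ₂ := lt_of_lt_of_le hr h2
  have hγ1 : 0 < γ₁ := lt_of_lt_of_le hγ2 h12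
  have h : (u ^ 2 + γ₂ ^ 2 - r ^ 2) / (2 * u * γ₂) ≤
      (u ^ 2 + γ₁ ^ 2 - r ^ 2) / (2 * u * γ₁) := by
    rw [div_le_div_iff₀ (by positivity) (by positivity)]
    have huu : u * u ≤ γ₁ * γ₂ := mul_le_mul (hup.trans h12) hup hu.le hγ1.le
    have key : 0 ≤ 2 * u * ((γ₁ - γ₂) * (γ₁ * γ₂ - u ^ 2 + r ^ 2)) := by
      apply mul_nonneg (by linarith)
      apply mul_nonneg (by linarith)
      nlinarith
    nlinarith [key]
  unfold Real.arccos
  have := Real.monotone_arcsin h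
  linarith
end

section
/- Let r > 0, γ > r, q₀ = (4/3)√(2r/(γ(γ−r))), and Q_γ(u) = 2∫_{γ−r}^u arccos((w²+γ²−r²)/(2wγ)) dw. Then Q_γ(u) ~ q₀ (u − γ + r)^{3/2} as u → (γ−r)⁺, i.e. Q_γ(u)/(q₀ (u−γ+r)^{3/2}) → 1. -/
open Real Filter Set MeasureTheory intervalIntegral

private lemma arccos_eq_two_arcsin' {x : ℝ} (h1 : -1 ≤ x) (h2 : x ≤ 1) :
    Real.arccos x = 2 * Real.arcsin (Real.sqrt ((1 - x) / 2)) := by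
  set y := Real.sqrt ((1 - x) / 2) with hy
  have hy0 : 0 ≤ y := Real.sqrt_nonneg _
  have hy2 : y ^ 2 = (1 - x) / 2 := Real.sq_sqrt (by linarith)
  have hy1 : y ≤ 1 := by nlinarith
  have harc0 : 0 ≤ Real.arcsin y := Real.arcsin_nonneg.2 hy0
  have harcle : Real.arcsin y ≤ π / 2 := Real.arcsin_le_pi_div_two y
  have hsin : Real.sin (Real.arcsin y) = y := Real.sin_arcsin (by linarith) hy1
  have hcos : Real.cos (2 * Real.arcsin y) = x := by
    rw [Real.cos_two_mul, ← Real.sin_sq_add_cos_sq (Real.arcsin y)] at *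
    nlinarith [Real.sin_sq_add_cos_sq (Real.arcsin y)]
  rw [← hcos, Real.arccos_cos (by linarith) (by linarith)]

private lemma tendsto_arccos_div' :
    Tendsto (fun x : ℝ => Real.arccos x / Real.sqrt (2 * (1 - x)))
      (nhdsWithin 1 (Set.Iio 1)) (nhds 1) := by
  have hslope : Tendsto (fun y : ℝ => Real.arcsin y / y) (nhdsWithin 0 {(0:ℝ)}ᶜ) (nhds 1) := by
    have h := Real.hasDerivAt_arcsin (x := 0) (by norm_num) (by norm_num)
    rw [hasDerivAt_iff_tendsto_slope] at h
    have : (1 : ℝ) / Real.sqrt (1 - 0 ^ 2) = 1 := by norm_num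
    rw [this] at h
    refine h.congr (fun y => ?_)
    simp [slope_def_field, Real.arcsin_zero]
  have hy : Tendsto (fun x : ℝ => Real.sqrt ((1 - x) / 2)) (nhdsWithin 1 (Set.Iio 1))
      (nhdsWithin 0 {(0:ℝ)}ᶜ) := by
    apply tendsto_nhdsWithin_of_tendsto_nhds_of_eventually_within
    · have : ContinuousAt (fun x : ℝ => Real.sqrt ((1 - x) / 2)) 1 := by fun_prop
      have h0 : Real.sqrt ((1 - 1) / 2) = 0 := by norm_num
      exact (h0 ▸ this.tendsto).mono_left nhdsWithin_le_nhds
    · filter_upwards [self_mem_nhdsWithin] with x hx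
      have : (0:ℝ) < (1 - x) / 2 := by simp at hx; linarith
      simpa using (Real.sqrt_pos.2 this).ne'
  have hcomp := hslope.comp hy
  refine hcomp.congr' ?_
  filter_upwards [Ioo_mem_nhdsLT_of_mem (by norm_num : (1:ℝ) ∈ Set.Ioc (-1) 1)] with x hx
  have h1 : -1 ≤ x := hx.1.le
  have h2 : x ≤ 1 := hx.2.le
  have hsq : Real.sqrt (2 * (1 - x)) = 2 * Real.sqrt ((1 - x) / 2) := by
    rw [show (2:ℝ) * (1 - x) = 2 ^ 2 * ((1 - x) / 2) by ring,
      Real.sqrt_mul (by positivity), Real.sqrt_sq (by norm_num)]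
  have hne : Real.sqrt ((1 - x) / 2) ≠ 0 := by
    have : (0:ℝ) < (1 - x) / 2 := by linarith [hx.2]
    exact (Real.sqrt_pos.2 this).ne'
  simp only [Function.comp]
  rw [arccos_eq_two_arcsin' h1 h2, hsq, mul_div_mul_left _ _ (by norm_num : (2:ℝ) ≠ 0)]

/-- Leading asymptotics of Q_γ: with q₀ = (4/3)√(2r/(γ(γ−r))),
Q_γ(u) ~ q₀ (u − γ + r)^{3/2} as u → (γ−r)⁺. -/
theorem stmt_6 (r γ : ℝ) (hr : 0 < r) (hγ : r < γ)
    (q₀ : ℝ) (hq₀ : q₀ = (4 / 3) * Real.sqrt (2 * r / (γ * (γ - r))))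
    (Q : ℝ → ℝ)
    (hQ : ∀ u, Q u =
      2 * ∫ w in (γ - r)..u, Real.arccos ((w ^ 2 + γ ^ 2 - r ^ 2) / (2 * w * γ))) :
    Filter.Tendsto (fun u => Q u / (q₀ * (u - γ + r) ^ ((3 : ℝ) / 2)))
      (nhdsWithin (γ - r) (Set.Ioi (γ - r))) (nhds 1) := by
  set a := γ - r with ha_def
  have ha : 0 < a := by simp [ha_def]; linarith
  have haγ : a < γ := by simp [ha_def]; linarith
  have hγ0 : 0 < γ := lt_trans hr hγ
  set g : ℝ → ℝ := fun w => (w ^ 2 + γ ^ 2 - r ^ 2) / (2 * w * γ) with hg_def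
  set f : ℝ → ℝ := fun w => Real.arccos (g w) with hf_def
  set F : ℝ → ℝ := fun u => ∫ w in a..u, f w with hF_def
  set G : ℝ → ℝ := fun u => (u - a) ^ ((3 : ℝ) / 2) with hG_def
  -- positivity of q₀
  have hc : 0 < Real.sqrt (2 * r / (γ * (γ - r))) :=
    Real.sqrt_pos.2 (by positivity)
  have hq0pos : 0 < q₀ := by rw [hq₀]; positivity
  -- continuity of f on Ioi 0
  have hfc : ContinuousOn f (Set.Ioi 0) := by
    apply Real.continuous_arccos.comp_continuousOn
    exact ContinuousOn.div (by fun_prop) (by fun_prop)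
      (fun w hw => by simp at hw ⊢; constructor <;> positivity)
  have hIcc : Set.Icc a γ ⊆ Set.Ioi 0 := fun w hw => lt_of_lt_of_le ha hw.1
  -- interval integrability up to γ
  have hint : IntervalIntegrable f volume a γ :=
    (hfc.mono (by rw [Set.uIcc_of_le haγ.le]; exact hIcc)).intervalIntegrable
  -- derivative of F on Ioo a γ
  have hF' : ∀ u ∈ Set.Ioo a γ, HasDerivAt F (f u) u := by
    intro u hu
    have hsub : Set.uIcc a u ⊆ Set.Ioi 0 := by
      rw [Set.uIcc_of_le hu.1.le]
      exact fun w hw => lt_of_lt_of_le ha hw.1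
    refine intervalIntegral.integral_hasDerivAt_right
      ((hfc.mono hsub).intervalIntegrable) ?_ ?_
    · exact hfc.stronglyMeasurableAtFilter isOpen_Ioi u (lt_trans ha hu.1)
    · exact hfc.continuousAt (Ioi_mem_nhds (lt_trans ha hu.1))
  -- derivative of G on Ioo a γ
  have hG' : ∀ u ∈ Set.Ioo a γ,
      HasDerivAt G ((3 / 2) * (u - a) ^ ((1 : ℝ) / 2)) u := by
    intro u hu
    have h1 : HasDerivAt (fun u : ℝ => u - a) 1 u := (hasDerivAt_id u).sub_const a
    have := h1.rpow_const (p := (3 : ℝ) / 2) (Or.inr (by norm_num))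
    simpa [show (3 : ℝ) / 2 - 1 = 1 / 2 by norm_num] using this
  have hG'ne : ∀ u ∈ Set.Ioo a γ, (3 / 2) * (u - a) ^ ((1 : ℝ) / 2) ≠ 0 := by
    intro u hu
    have : (0:ℝ) < (u - a) ^ ((1 : ℝ) / 2) := Real.rpow_pos_of_pos (by linarith [hu.1]) _
    positivity
  -- F tends to 0
  have hFa : Tendsto F (nhdsWithin a (Set.Ioi a)) (nhds 0) := by
    have hcont : ContinuousOn F (Set.uIcc a γ) := by
      apply intervalIntegral.continuousOn_primitive_interval
      rw [Set.uIcc_of_le haγ.le]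
      exact (hfc.mono hIcc).integrableOn_compact isCompact_Icc
    have h0 : F a = 0 := intervalIntegral.integral_same
    have := (hcont a (by rw [Set.uIcc_of_le haγ.le]; exact ⟨le_refl a, haγ.le⟩))
    rw [ContinuousWithinAt, h0, Set.uIcc_of_le haγ.le] at this
    rw [← nhdsWithin_Ioo_eq_nhdsGT haγ]
    exact this.mono_left (nhdsWithin_mono _ Set.Ioo_subset_Icc_self)
  -- G tends to 0
  have hGa : Tendsto G (nhdsWithin a (Set.Ioi a)) (nhds 0) := by
    have hca : ContinuousAt G a := by
      apply ContinuousAt.comp (g := fun x : ℝ => x ^ ((3:ℝ)/2))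
      · exact Real.continuousAt_rpow_const _ _ (Or.inr (by norm_num))
      · fun_prop
    have h0 : G a = 0 := by
      simp [hG_def, Real.zero_rpow (by norm_num : (3:ℝ)/2 ≠ 0)]
    exact (h0 ▸ hca.tendsto).mono_left nhdsWithin_le_nhds
  -- g tends to 1 from below
  have hga1 : g a = 1 := by
    rw [hg_def]
    have hnum : a ^ 2 + γ ^ 2 - r ^ 2 = 2 * a * γ := by rw [ha_def]; ring
    simp only [hnum]
    exact div_self (by positivity)
  have hglt : ∀ u ∈ Set.Ioo a γ, 1 - g u = (u - a) * ((r + γ - u) / (2 * u * γ)) := by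
    intro u hu
    have hu0 : 0 < u := lt_trans ha hu.1
    rw [hg_def]
    field_simp
    rw [ha_def]; ring
  have hg1 : Tendsto g (nhdsWithin a (Set.Ioi a)) (nhdsWithin 1 (Set.Iio 1)) := by
    apply tendsto_nhdsWithin_of_tendsto_nhds_of_eventually_within
    · have : ContinuousAt g a := by
        apply ContinuousAt.div (by fun_prop) (by fun_prop)
        positivity
      exact (hga1 ▸ this.tendsto).mono_left nhdsWithin_le_nhds
    · filter_upwards [Ioo_mem_nhdsGT_of_mem ⟨le_refl a, haγ⟩] with u hu
      have h1 := hglt u hu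
      have hu0 : 0 < u := lt_trans ha hu.1
      have : 0 < 1 - g u := by
        rw [h1]
        have h3 : 0 < r + γ - u := by linarith [hu.2]
        have h4 : 0 < u - a := by linarith [hu.1]
        positivity
      simp; linarith
  -- first factor tends to 1
  have h1 : Tendsto (fun u => Real.arccos (g u) / Real.sqrt (2 * (1 - g u)))
      (nhdsWithin a (Set.Ioi a)) (nhds 1) := tendsto_arccos_div'.comp hg1
  -- second factor
  have h2 : Tendsto (fun u => (2 / 3) * Real.sqrt ((r + γ - u) / (u * γ)))
      (nhdsWithin a (Set.Ioi a)) (nhds (q₀ / 2)) := by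
    have hca : ContinuousAt (fun u => (2 / 3 : ℝ) * Real.sqrt ((r + γ - u) / (u * γ))) a := by
      apply ContinuousAt.mul continuousAt_const
      apply Real.continuous_sqrt.continuousAt.comp
      apply ContinuousAt.div (by fun_prop) (by fun_prop)
      exact mul_ne_zero ha.ne' hγ0.ne'
    have hval : (2 / 3 : ℝ) * Real.sqrt ((r + γ - a) / (a * γ)) = q₀ / 2 := by
      rw [hq₀, ha_def]
      rw [show r + γ - (γ - r) = 2 * r by ring]
      rw [show (γ - r) * γ = γ * (γ - r) by ring]
      ring
    exact (hval ▸ hca.tendsto).mono_left nhdsWithin_le_nhds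
  -- eventual equality of f'/g' with product
  have hEq : ∀ᶠ u in nhdsWithin a (Set.Ioi a),
      f u / ((3 / 2) * (u - a) ^ ((1 : ℝ) / 2)) =
      (Real.arccos (g u) / Real.sqrt (2 * (1 - g u))) *
        ((2 / 3) * Real.sqrt ((r + γ - u) / (u * γ))) := by
    filter_upwards [Ioo_mem_nhdsGT_of_mem ⟨le_refl a, haγ⟩] with u hu
    have hu0 : 0 < u := lt_trans ha hu.1
    have hua : 0 < u - a := by linarith [hu.1]
    have hrγu : 0 < r + γ - u := by linarith [hu.2]
    have hkey : 2 * (1 - g u) = (u - a) * ((r + γ - u) / (u * γ)) := by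
      rw [hglt u hu]; field_simp
    have hsplit : Real.sqrt (2 * (1 - g u)) =
        Real.sqrt (u - a) * Real.sqrt ((r + γ - u) / (u * γ)) := by
      rw [hkey, Real.sqrt_mul hua.le]
    have hrpow : (u - a) ^ ((1 : ℝ) / 2) = Real.sqrt (u - a) :=
      (Real.sqrt_eq_rpow _).symm
    have hs1 : (0:ℝ) < Real.sqrt (u - a) := Real.sqrt_pos.2 hua
    have hs2 : (0:ℝ) < Real.sqrt ((r + γ - u) / (u * γ)) :=
      Real.sqrt_pos.2 (by positivity)
    rw [hsplit, hrpow]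
    field_simp
    ring
  have hdiv : Tendsto (fun u => f u / ((3 / 2) * (u - a) ^ ((1 : ℝ) / 2)))
      (nhdsWithin a (Set.Ioi a)) (nhds (q₀ / 2)) := by
    have := h1.mul h2
    rw [one_mul] at this
    exact Tendsto.congr' (hEq.mono fun u hu => hu.symm) this
  -- L'Hôpital
  have hFG : Tendsto (fun u => F u / G u) (nhdsWithin a (Set.Ioi a)) (nhds (q₀ / 2)) :=
    HasDerivAt.lhopital_zero_right_on_Ioo haγ hF' hG' hG'ne hFa hGa hdiv
  -- conclude
  have hfinal := hFG.const_mul (2 / q₀)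
  have : (2 / q₀) * (q₀ / 2) = 1 := by field_simp
  rw [this] at hfinal
  refine hfinal.congr (fun u => ?_)
  rw [hQ u]
  rw [show u - γ + r = u - a by rw [ha_def]; ring]
  exact (mul_div_mul_comm 2 _ q₀ _).symm
end

section
/- Let r > 0 and let γ₁ ≥ γ₂ ≥ r with γ₂ > r. Then for every c ∈ (0, r), Q_{γ₂}(γ₂ − c) ≥ Q_{γ₁}(γ₁ − c), where Q_γ(u) = 2∫_{γ−r}^u arccos((w²+γ²−r²)/(2wγ)) dw. Consequently the hop advancements satisfy the stochastic ordering ℙ_{γ₂}(C > c) = 1 − e^{−λ Q_{γ₂}(γ₂−c)} ≥ 1 − e^{−λ Q_{γ₁}(γ₁−c)} = ℙ_{γ₁}(C > c) for every λ > 0. -/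
lemma arccos_antitone : Antitone Real.arccos := fun x y h => by
  simp only [Real.arccos]
  exact sub_le_sub_left (Real.monotone_arcsin h) _

set_option maxHeartbeats 1000000 in
/-- Stochastic ordering of hop advancements (inequality (32)): for r ≤ γ₂ ≤ γ₁
with γ₂ > r and c ∈ (0, r), Q_{γ₂}(γ₂ − c) ≥ Q_{γ₁}(γ₁ − c), hence
1 − e^{−λQ_{γ₂}(γ₂−c)} ≥ 1 − e^{−λQ_{γ₁}(γ₁−c)} for every λ > 0. -/
theorem stmt_11 (r γ₁ γ₂ : ℝ) (hr : 0 < r) (h2 : r < γ₂) (h12 : γ₂ ≤ γ₁)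
    (Q : ℝ → ℝ → ℝ)
    (hQ : ∀ γ u, Q γ u =
      2 * ∫ w in (γ - r)..u, Real.arccos ((w ^ 2 + γ ^ 2 - r ^ 2) / (2 * w * γ))) :
    ∀ c ∈ Set.Ioo (0 : ℝ) r,
      Q γ₁ (γ₁ - c) ≤ Q γ₂ (γ₂ - c) ∧
        ∀ lam : ℝ, 0 < lam →
          1 - Real.exp (-(lam * Q γ₁ (γ₁ - c))) ≤
            1 - Real.exp (-(lam * Q γ₂ (γ₂ - c))) := by
  intro c hc
  obtain ⟨hc0, hcr⟩ := hc
  -- change of variables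
  have hcv : ∀ γ : ℝ, (∫ w in (γ - r)..(γ - c),
      Real.arccos ((w ^ 2 + γ ^ 2 - r ^ 2) / (2 * w * γ))) =
      ∫ t in c..r, Real.arccos (((γ - t) ^ 2 + γ ^ 2 - r ^ 2) / (2 * (γ - t) * γ)) := by
    intro γ
    rw [intervalIntegral.integral_comp_sub_left
      (fun w => Real.arccos ((w ^ 2 + γ ^ 2 - r ^ 2) / (2 * w * γ))) γ]
  -- integrability
  have hint : ∀ γ : ℝ, r < γ → IntervalIntegrable
      (fun t => Real.arccos (((γ - t) ^ 2 + γ ^ 2 - r ^ 2) / (2 * (γ - t) * γ)))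
      MeasureTheory.volume c r := by
    intro γ hγ
    apply ContinuousOn.intervalIntegrable
    apply Real.continuous_arccos.comp_continuousOn
    apply ContinuousOn.div
    · fun_prop
    · fun_prop
    · intro t ht
      rw [Set.uIcc_of_le hcr.le] at ht
      have h1 : 0 < γ - t := by linarith [ht.2]
      have h2 : 0 < γ := by linarith
      positivity
  -- pointwise inequality
  have hpt : ∀ t ∈ Set.Icc c r,
      Real.arccos (((γ₁ - t) ^ 2 + γ₁ ^ 2 - r ^ 2) / (2 * (γ₁ - t) * γ₁)) ≤
      Real.arccos (((γ₂ - t) ^ 2 + γ₂ ^ 2 - r ^ 2) / (2 * (γ₂ - t) * γ₂)) := by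
    intro t ht
    apply arccos_antitone
    have hw2 : 0 < γ₂ - t := by linarith [ht.2]
    have hw1 : 0 < γ₁ - t := by linarith [ht.2]
    have hg2 : 0 < γ₂ := by linarith
    have hg1 : 0 < γ₁ := by linarith
    rw [div_le_div_iff₀ (by positivity) (by positivity)]
    nlinarith [mul_nonneg (mul_nonneg (sub_nonneg.2 h12)
      (mul_nonneg (sub_nonneg.2 ht.2) (by linarith [ht.1] : (0:ℝ) ≤ r + t)))
      (by linarith [ht.2] : (0:ℝ) ≤ γ₁ + γ₂ - t)]
  have key : Q γ₁ (γ₁ - c) ≤ Q γ₂ (γ₂ - c) := by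
    rw [hQ, hQ, hcv, hcv]
    have hI : (∫ t in c..r,
        Real.arccos (((γ₁ - t) ^ 2 + γ₁ ^ 2 - r ^ 2) / (2 * (γ₁ - t) * γ₁))) ≤
        ∫ t in c..r, Real.arccos (((γ₂ - t) ^ 2 + γ₂ ^ 2 - r ^ 2) / (2 * (γ₂ - t) * γ₂)) :=
      intervalIntegral.integral_mono_on (by linarith) (hint γ₁ (by linarith)) (hint γ₂ h2) hpt
    linarith
  refine ⟨key, fun lam hlam => ?_⟩
  have : Real.exp (-(lam * Q γ₂ (γ₂ - c))) ≤ Real.exp (-(lam * Q γ₁ (γ₁ - c))) := by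
    apply Real.exp_le_exp.2
    have := mul_le_mul_of_nonneg_left key hlam.le
    linarith
  linarith
end
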